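/- arXiv:1804.07565 — 4 statements merged into one kernel-verified Lean document; each statement's English description precedes it below -/
import Mathlib

section
/- Let a < b be real numbers, let y : ℝ → ℝ be continuously differentiable on [a,b], and let μ be the occupation measure of y, i.e., the pushforward of the Lebesgue measure restricted to [a,b] under the map x ↦ (x, y(x), y'(x)). Then for every continuously differentiable function φ : ℝ × ℝ → ℝ, ∫ (∂φ/∂x(x,y) + ∂φ/∂y(x,y) · z) dμ(x,y,z) = φ(b, y(b)) − φ(a, y(a)). (This is equation (15a) of Theorem 1 specialized to n = n_y = 1 and Ω = [a,b], where the boundary measure consists of the Dirac masses at (a, y(a), y'(a)) and (b, y(b), y'(b)) with outward normals η(a) = −1 and η(b) = +1.) -/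
open MeasureTheory Set

/-- Equation (15a) of Theorem 1 specialized to `n = n_y = 1`, `Ω = [a,b]`:
for the occupation measure `μ` of a continuously differentiable function `y` on `[a,b]`
(with derivative `y'`) and any `C¹` test function `φ`,
`∫ (∂φ/∂x + ∂φ/∂y ⬝ z) dμ = φ(b, y b) - φ(a, y a)`. -/
theorem occupation_measure_transport_1d
    (a b : ℝ) (hab : a < b) (y y' : ℝ → ℝ)
    (hy : ∀ x ∈ Icc a b, HasDerivWithinAt y (y' x) (Icc a b) x)
    (hy' : ContinuousOn y' (Icc a b))
    (μ : Measure (ℝ × ℝ × ℝ))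
    (hμ : μ = Measure.map (fun x => (x, y x, y' x)) (volume.restrict (Icc a b)))
    (φ : ℝ × ℝ → ℝ) (hφ : ContDiff ℝ 1 φ) :
    ∫ p : ℝ × ℝ × ℝ,
        (fderiv ℝ φ (p.1, p.2.1) (1, 0) + fderiv ℝ φ (p.1, p.2.1) (0, 1) * p.2.2) ∂μ
      = φ (b, y b) - φ (a, y a) := by
  have hyc : ContinuousOn y (Icc a b) := fun x hx => (hy x hx).continuousWithinAt
  have hfd : Continuous (fderiv ℝ φ) := hφ.continuous_fderiv one_ne_zero
  have hgc : Continuous (fun p : ℝ × ℝ × ℝ =>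
      fderiv ℝ φ (p.1, p.2.1) (1, 0) + fderiv ℝ φ (p.1, p.2.1) (0, 1) * p.2.2) := by
    have h1 : Continuous fun p : ℝ × ℝ × ℝ => fderiv ℝ φ (p.1, p.2.1) :=
      hfd.comp (continuous_fst.prodMk (continuous_snd.fst))
    exact (h1.clm_apply continuous_const).add
      ((h1.clm_apply continuous_const).mul continuous_snd.snd)
  have hmap : AEMeasurable (fun x => (x, y x, y' x)) (volume.restrict (Icc a b)) := by
    refine ContinuousOn.aemeasurable ?_ measurableSet_Icc
    exact continuousOn_id.prodMk (hyc.prodMk hy')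
  rw [hμ, integral_map hmap hgc.aestronglyMeasurable]
  have key : ∫ x in Icc a b,
      (fderiv ℝ φ (x, y x) (1, 0) + fderiv ℝ φ (x, y x) (0, 1) * y' x)
      = φ (b, y b) - φ (a, y a) := by
    rw [MeasureTheory.integral_Icc_eq_integral_Ioc,
      ← intervalIntegral.integral_of_le hab.le]
    set g' : ℝ → ℝ := fun x =>
      fderiv ℝ φ (x, y x) (1, 0) + fderiv ℝ φ (x, y x) (0, 1) * y' x with hg'
    have hg'c : ContinuousOn g' (Icc a b) := by
      have h1 : ContinuousOn (fun x => fderiv ℝ φ (x, y x)) (Icc a b) :=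
        hfd.comp_continuousOn (continuousOn_id.prodMk hyc)
      exact (h1.clm_apply continuousOn_const).add
        ((h1.clm_apply continuousOn_const).mul hy')
    apply intervalIntegral.integral_eq_sub_of_hasDeriv_right_of_le hab.le
    · exact (hφ.continuous.comp_continuousOn (continuousOn_id.prodMk hyc))
    · intro x hx
      have hxmem : x ∈ Icc a b := Ioo_subset_Icc_self hx
      have hIcc : Icc a b ∈ nhds x := Icc_mem_nhds hx.1 hx.2
      have hyx : HasDerivAt y (y' x) x := (hy x hxmem).hasDerivAt hIcc
      have hcurve : HasDerivAt (fun x => (x, y x)) (1, y' x) x :=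
        (hasDerivAt_id x).prodMk hyx
      have hphi : HasFDerivAt φ (fderiv ℝ φ (x, y x)) (x, y x) :=
        (hφ.differentiable one_ne_zero (x, y x)).hasFDerivAt
      have := hphi.comp_hasDerivAt x hcurve
      have heq : fderiv ℝ φ (x, y x) (1, y' x) = g' x := by
        have : ((1 : ℝ), y' x) = (1, 0) + y' x • ((0 : ℝ), (1 : ℝ)) := by
          simp [Prod.ext_iff]
        rw [this, map_add, ContinuousLinearMap.map_smul]
        simp [hg', smul_eq_mul, mul_comm]
      exact (heq ▸ this).hasDerivWithinAt
    · exact hg'c.intervalIntegrable_of_Icc hab.le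
  simpa using key
end

section
/- Let a < b be real numbers, let y : ℝ → ℝ be twice continuously differentiable on [a,b], let F : ℝ³ → ℝ be continuous, let B : ℝ² → ℝ be continuously differentiable, and suppose F(x, y(x), y'(x)) + B(x, y(x)) y''(x) = 0 for all x ∈ [a,b]. Let μ be the occupation measure of y, i.e., the pushforward of the Lebesgue measure restricted to [a,b] under the map x ↦ (x, y(x), y'(x)). Then for every continuously differentiable φ : ℝ × ℝ → ℝ: ∫ φ(x,y) F(x,y,z) dμ − ∫ φ(x,y) [∂B/∂x(x,y) + ∂B/∂y(x,y) · z] z dμ − ∫ [∂φ/∂x(x,y) + ∂φ/∂y(x,y) · z] B(x,y) z dμ + B(b, y(b)) φ(b, y(b)) y'(b) − B(a, y(a)) φ(a, y(a)) y'(a) = 0. (This is equation (15b) of Theorem 1 specialized to n = n_y = 1 and Ω = [a,b], where the boundary measure consists of the Dirac masses at the endpoint graph points with outward normals η(a) = −1 and η(b) = +1.) -/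
open MeasureTheory Set

/-- Equation (15b) of Theorem 1 specialized to `n = n_y = 1`, `Ω = [a,b]`, for a second-order
ODE `F(x, y, y') + B(x, y) y'' = 0`: the occupation measure `μ` of `y` satisfies, for every
`C¹` test function `φ`,
`∫ φ F dμ − ∫ φ (∂B/∂x + ∂B/∂y z) z dμ − ∫ (∂φ/∂x + ∂φ/∂y z) B z dμ
  + B(b,y(b)) φ(b,y(b)) y'(b) − B(a,y(a)) φ(a,y(a)) y'(a) = 0`. -/
theorem occupation_measure_second_order_1d
    (a b : ℝ) (hab : a < b) (y y' y'' : ℝ → ℝ)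
    (hy : ∀ x ∈ Icc a b, HasDerivWithinAt y (y' x) (Icc a b) x)
    (hy' : ∀ x ∈ Icc a b, HasDerivWithinAt y' (y'' x) (Icc a b) x)
    (hy'' : ContinuousOn y'' (Icc a b))
    (F : ℝ × ℝ × ℝ → ℝ) (hF : Continuous F)
    (B : ℝ × ℝ → ℝ) (hB : ContDiff ℝ 1 B)
    (hode : ∀ x ∈ Icc a b, F (x, y x, y' x) + B (x, y x) * y'' x = 0)
    (μ : Measure (ℝ × ℝ × ℝ))
    (hμ : μ = Measure.map (fun x => (x, y x, y' x)) (volume.restrict (Icc a b)))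
    (φ : ℝ × ℝ → ℝ) (hφ : ContDiff ℝ 1 φ) :
    (∫ p : ℝ × ℝ × ℝ, φ (p.1, p.2.1) * F p ∂μ)
      - (∫ p : ℝ × ℝ × ℝ,
          φ (p.1, p.2.1)
            * (fderiv ℝ B (p.1, p.2.1) (1, 0) + fderiv ℝ B (p.1, p.2.1) (0, 1) * p.2.2)
            * p.2.2 ∂μ)
      - (∫ p : ℝ × ℝ × ℝ,
          (fderiv ℝ φ (p.1, p.2.1) (1, 0) + fderiv ℝ φ (p.1, p.2.1) (0, 1) * p.2.2)
            * B (p.1, p.2.1) * p.2.2 ∂μ)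
      + B (b, y b) * φ (b, y b) * y' b - B (a, y a) * φ (a, y a) * y' a = 0 := by
  have hyc : ContinuousOn y (Icc a b) := fun x hx => (hy x hx).continuousWithinAt
  have hy'c : ContinuousOn y' (Icc a b) := fun x hx => (hy' x hx).continuousWithinAt
  have hTc : ContinuousOn (fun x => (x, y x, y' x)) (Icc a b) :=
    continuousOn_id.prodMk (hyc.prodMk hy'c)
  have hTm : AEMeasurable (fun x => (x, y x, y' x)) (volume.restrict (Icc a b)) :=
    (hTc.aemeasurable measurableSet_Icc)
  have hBc : Continuous B := hB.continuous
  have hφc : Continuous φ := hφ.continuous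
  have hBd : Continuous (fderiv ℝ B) := hB.continuous_fderiv one_ne_zero
  have hφd : Continuous (fderiv ℝ φ) := hφ.continuous_fderiv one_ne_zero
  have hpr : Continuous (fun p : ℝ × ℝ × ℝ => (p.1, p.2.1)) :=
    continuous_fst.prodMk (continuous_fst.comp continuous_snd)
  -- continuity of the three integrands
  have hf1 : Continuous (fun p : ℝ × ℝ × ℝ => φ (p.1, p.2.1) * F p) :=
    (hφc.comp hpr).mul hF
  have hf2 : Continuous (fun p : ℝ × ℝ × ℝ =>
      φ (p.1, p.2.1)
        * (fderiv ℝ B (p.1, p.2.1) (1, 0) + fderiv ℝ B (p.1, p.2.1) (0, 1) * p.2.2)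
        * p.2.2) := by
    have h1 : Continuous (fun p : ℝ × ℝ × ℝ => fderiv ℝ B (p.1, p.2.1) (1, 0)) :=
      (hBd.comp hpr).clm_apply continuous_const
    have h2 : Continuous (fun p : ℝ × ℝ × ℝ => fderiv ℝ B (p.1, p.2.1) (0, 1)) :=
      (hBd.comp hpr).clm_apply continuous_const
    exact ((hφc.comp hpr).mul (h1.add (h2.mul (continuous_snd.comp continuous_snd)))).mul
      (continuous_snd.comp continuous_snd)
  have hf3 : Continuous (fun p : ℝ × ℝ × ℝ =>
      (fderiv ℝ φ (p.1, p.2.1) (1, 0) + fderiv ℝ φ (p.1, p.2.1) (0, 1) * p.2.2)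
        * B (p.1, p.2.1) * p.2.2) := by
    have h1 : Continuous (fun p : ℝ × ℝ × ℝ => fderiv ℝ φ (p.1, p.2.1) (1, 0)) :=
      (hφd.comp hpr).clm_apply continuous_const
    have h2 : Continuous (fun p : ℝ × ℝ × ℝ => fderiv ℝ φ (p.1, p.2.1) (0, 1)) :=
      (hφd.comp hpr).clm_apply continuous_const
    exact ((h1.add (h2.mul (continuous_snd.comp continuous_snd))).mul
      (hBc.comp hpr)).mul (continuous_snd.comp continuous_snd)
  rw [hμ, integral_map hTm hf1.aestronglyMeasurable,
    integral_map hTm hf2.aestronglyMeasurable, integral_map hTm hf3.aestronglyMeasurable]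
  -- define g and its derivative
  set g : ℝ → ℝ := fun x => φ (x, y x) * B (x, y x) * y' x with hg
  set g' : ℝ → ℝ := fun x =>
    (fderiv ℝ φ (x, y x) (1, 0) + fderiv ℝ φ (x, y x) (0, 1) * y' x) * B (x, y x) * y' x
      + φ (x, y x) * (fderiv ℝ B (x, y x) (1, 0) + fderiv ℝ B (x, y x) (0, 1) * y' x) * y' x
      + φ (x, y x) * B (x, y x) * y'' x with hg'def
  have key : ∀ (f : ℝ × ℝ → ℝ) (x : ℝ),
      fderiv ℝ f (x, y x) (1, y' x)
        = fderiv ℝ f (x, y x) (1, 0) + fderiv ℝ f (x, y x) (0, 1) * y' x := by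
    intro f x
    have h : ((1 : ℝ), y' x) = (1, 0) + y' x • ((0 : ℝ), (1 : ℝ)) := by
      simp [Prod.ext_iff]
    rw [h, map_add, (fderiv ℝ f (x, y x)).map_smul, smul_eq_mul, mul_comm]
  have hderiv : ∀ x ∈ Icc a b, HasDerivWithinAt g (g' x) (Icc a b) x := by
    intro x hx
    have hγ : HasDerivWithinAt (fun x => (x, y x)) ((1 : ℝ), y' x) (Icc a b) x :=
      (hasDerivWithinAt_id x _).prodMk (hy x hx)
    have hφx : HasDerivWithinAt (fun x => φ (x, y x)) (fderiv ℝ φ (x, y x) (1, y' x))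
        (Icc a b) x :=
      ((hφ.differentiable one_ne_zero).differentiableAt.hasFDerivAt.comp_hasDerivWithinAt x hγ)
    have hBx : HasDerivWithinAt (fun x => B (x, y x)) (fderiv ℝ B (x, y x) (1, y' x))
        (Icc a b) x :=
      ((hB.differentiable one_ne_zero).differentiableAt.hasFDerivAt.comp_hasDerivWithinAt x hγ)
    have h := (hφx.mul hBx).mul (hy' x hx)
    refine h.congr_deriv ?_
    rw [hg'def, key φ x, key B x, Pi.mul_apply]
    ring
  have hgcont : ContinuousOn g (Icc a b) := fun x hx => (hderiv x hx).continuousWithinAt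
  have hγc : ContinuousOn (fun x : ℝ => (x, y x)) (Icc a b) := continuousOn_id.prodMk hyc
  have hg'cont : ContinuousOn g' (Icc a b) := by
    have h1 : ContinuousOn (fun x : ℝ => fderiv ℝ φ (x, y x) (1, 0)) (Icc a b) :=
      (hφd.comp_continuousOn hγc).clm_apply continuousOn_const
    have h2 : ContinuousOn (fun x : ℝ => fderiv ℝ φ (x, y x) (0, 1)) (Icc a b) :=
      (hφd.comp_continuousOn hγc).clm_apply continuousOn_const
    have h3 : ContinuousOn (fun x : ℝ => fderiv ℝ B (x, y x) (1, 0)) (Icc a b) :=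
      (hBd.comp_continuousOn hγc).clm_apply continuousOn_const
    have h4 : ContinuousOn (fun x : ℝ => fderiv ℝ B (x, y x) (0, 1)) (Icc a b) :=
      (hBd.comp_continuousOn hγc).clm_apply continuousOn_const
    have hφγ : ContinuousOn (fun x : ℝ => φ (x, y x)) (Icc a b) := hφc.comp_continuousOn hγc
    have hBγ : ContinuousOn (fun x : ℝ => B (x, y x)) (Icc a b) := hBc.comp_continuousOn hγc
    exact (((h1.add (h2.mul hy'c)).mul hBγ).mul hy'c).add
      (((hφγ.mul ((h3.add (h4.mul hy'c)).mul hy'c))).add ((hφγ.mul hBγ).mul hy'')) |>.congr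
      (by intro x hx; simp [hg'def]; ring)
  -- FTC
  have hftc : ∫ x in Icc a b, g' x = g b - g a := by
    rw [MeasureTheory.integral_Icc_eq_integral_Ioc, ← intervalIntegral.integral_of_le hab.le]
    apply intervalIntegral.integral_eq_sub_of_hasDeriv_right_of_le hab.le hgcont
    · intro x hx
      exact ((hderiv x (Ioo_subset_Icc_self hx)).hasDerivAt
        (Icc_mem_nhds hx.1 hx.2)).hasDerivWithinAt
    · exact (intervalIntegrable_iff_integrableOn_Icc_of_le hab.le).mpr
        (hg'cont.integrableOn_compact isCompact_Icc)
  -- integrability of the pulled-back integrands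
  have hint1 : IntegrableOn (fun x => φ (x, y x) * F (x, y x, y' x)) (Icc a b) :=
    ((hf1.comp_continuousOn hTc)).integrableOn_compact isCompact_Icc
  have hint2 : IntegrableOn (fun x =>
      φ (x, y x) * (fderiv ℝ B (x, y x) (1, 0) + fderiv ℝ B (x, y x) (0, 1) * y' x) * y' x)
      (Icc a b) :=
    ((hf2.comp_continuousOn hTc)).integrableOn_compact isCompact_Icc
  have hint3 : IntegrableOn (fun x =>
      (fderiv ℝ φ (x, y x) (1, 0) + fderiv ℝ φ (x, y x) (0, 1) * y' x) * B (x, y x) * y' x)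
      (Icc a b) :=
    ((hf3.comp_continuousOn hTc)).integrableOn_compact isCompact_Icc
  have hsplit : (∫ x in Icc a b, (φ (x, y x) * F (x, y x, y' x)
      - φ (x, y x) * (fderiv ℝ B (x, y x) (1, 0) + fderiv ℝ B (x, y x) (0, 1) * y' x) * y' x
      - (fderiv ℝ φ (x, y x) (1, 0) + fderiv ℝ φ (x, y x) (0, 1) * y' x) * B (x, y x) * y' x))
      = (∫ x in Icc a b, φ (x, y x) * F (x, y x, y' x))
        - (∫ x in Icc a b,
            φ (x, y x) * (fderiv ℝ B (x, y x) (1, 0) + fderiv ℝ B (x, y x) (0, 1) * y' x) * y' x)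
        - (∫ x in Icc a b,
            (fderiv ℝ φ (x, y x) (1, 0) + fderiv ℝ φ (x, y x) (0, 1) * y' x) * B (x, y x) * y' x) := by
    have h12 := integral_sub hint1 hint2
    have h123 := integral_sub (hint1.sub hint2) hint3
    simp only [Pi.sub_apply] at h123
    rw [h12] at h123
    exact h123
  rw [← hsplit]
  have hval : (∫ x in Icc a b, (φ (x, y x) * F (x, y x, y' x)
      - φ (x, y x) * (fderiv ℝ B (x, y x) (1, 0) + fderiv ℝ B (x, y x) (0, 1) * y' x) * y' x
      - (fderiv ℝ φ (x, y x) (1, 0) + fderiv ℝ φ (x, y x) (0, 1) * y' x) * B (x, y x) * y' x))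
      = g a - g b := by
    rw [setIntegral_congr_fun measurableSet_Icc (g := fun x => -g' x) ?_, integral_neg, hftc, neg_sub]
    intro x hx
    have hF' : F (x, y x, y' x) = -(B (x, y x) * y'' x) := by
      have := hode x hx; linarith
    simp only [hg'def, hF']
    ring
  rw [hval]
  simp only [hg]
  ring
end

section
/- Let a < b be real numbers and let F, G, L, L∂ : ℝ³ → ℝ be continuous. Call a pair (μ, μ∂) of compactly supported finite nonnegative Borel measures on [a,b] × ℝ × ℝ and {a,b} × ℝ × ℝ feasible if: (i) for every smooth φ : ℝ² → ℝ, ∫ (∂φ/∂x(x,y) + ∂φ/∂y(x,y) z) dμ(x,y,z) = ∫ φ(x,y) η(x) dμ∂(x,y,z), where η(a) = −1 and η(b) = +1; (ii) for every smooth φ : ℝ² → ℝ, ∫ φ(x,y) F(x,y,z) dμ(x,y,z) = 0; (iii) for every smooth φ : ℝ² → ℝ, ∫ φ(x,y) G(x,y,z) dμ∂(x,y,z) = 0; (iv) the x-marginal of μ∂ equals δ_a + δ_b. Then for every y : ℝ → ℝ continuously differentiable on [a,b] with F(x, y(x), y'(x)) = 0 for all x ∈ [a,b] and G(c, y(c),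 y'(c)) = 0 for c ∈ {a,b}, and for every real number c: if c ≤ ∫ L dμ + ∫ L∂ dμ∂ for every feasible pair (μ, μ∂), then c ≤ ∫_a^b L(x, y(x), y'(x)) dx + L∂(a, y(a), y'(a)) + L∂(b, y(b), y'(b)); and if c ≥ ∫ L dμ + ∫ L∂ dμ∂ for every feasible pair, then c ≥ ∫_a^b L(x, y(x), y'(x)) dx + L∂(a, y(a), y'(a)) + L∂(b, y(b), y'(b)). (This is Theorem 2: the optimal value of the infinite-dimensional linear program lower/upper bounds the functional J evaluated along any solution of the differential equation, specialized to n = n_y = 1 and Ω = [a,b].) -/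
open MeasureTheory Set

/-- A pair `(μ, μ∂)` of compactly supported finite nonnegative Borel measures on
`[a,b] × ℝ × ℝ` and `{a,b} × ℝ × ℝ` is feasible for the infinite-dimensional LP associated to
the ODE `F(x, y, y') = 0` with boundary condition `G = 0`, where the outward normal is
`η(a) = -1`, `η(b) = +1`. -/
def FeasiblePair (a b : ℝ) (F G : ℝ × ℝ × ℝ → ℝ) (μ μb : Measure (ℝ × ℝ × ℝ)) : Prop :=
  IsFiniteMeasure μ ∧ IsFiniteMeasure μb ∧
  (∃ K : Set (ℝ × ℝ × ℝ), IsCompact K ∧ μ Kᶜ = 0) ∧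
  (∃ K : Set (ℝ × ℝ × ℝ), IsCompact K ∧ μb Kᶜ = 0) ∧
  μ ((Icc a b ×ˢ (univ : Set ℝ) ×ˢ (univ : Set ℝ))ᶜ) = 0 ∧
  μb ((({a, b} : Set ℝ) ×ˢ (univ : Set ℝ) ×ˢ (univ : Set ℝ))ᶜ) = 0 ∧
  (∀ φ : ℝ × ℝ → ℝ, ContDiff ℝ (⊤ : ℕ∞) φ →
    ∫ p : ℝ × ℝ × ℝ,
        (fderiv ℝ φ (p.1, p.2.1) (1, 0) + fderiv ℝ φ (p.1, p.2.1) (0, 1) * p.2.2) ∂μ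
      = ∫ p : ℝ × ℝ × ℝ, φ (p.1, p.2.1) * (if p.1 = a then (-1 : ℝ) else 1) ∂μb) ∧
  (∀ φ : ℝ × ℝ → ℝ, ContDiff ℝ (⊤ : ℕ∞) φ →
    ∫ p : ℝ × ℝ × ℝ, φ (p.1, p.2.1) * F p ∂μ = 0) ∧
  (∀ φ : ℝ × ℝ → ℝ, ContDiff ℝ (⊤ : ℕ∞) φ →
    ∫ p : ℝ × ℝ × ℝ, φ (p.1, p.2.1) * G p ∂μb = 0) ∧
  Measure.map (fun p : ℝ × ℝ × ℝ => p.1) μb = Measure.dirac a + Measure.dirac b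

section Aux

variable {α : Type*} [MeasurableSpace α] [MeasurableSingletonClass α]

lemma integrable_dirac_of_sm {f : α → ℝ} (hf : StronglyMeasurable f) (x : α) :
    Integrable f (Measure.dirac x) := by
  refine ⟨hf.aestronglyMeasurable, ?_⟩
  rw [HasFiniteIntegral, lintegral_dirac]
  exact ENNReal.coe_lt_top

lemma integral_dirac_add_dirac {f : α → ℝ} (hf : StronglyMeasurable f) (x z : α) :
    ∫ p, f p ∂(Measure.dirac x + Measure.dirac z) = f x + f z := by
  rw [integral_add_measure (integrable_dirac_of_sm hf x) (integrable_dirac_of_sm hf z),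
    integral_dirac, integral_dirac]

end Aux

theorem occupation_feasible
    (a b : ℝ) (hab : a < b) (F G L Lb : ℝ × ℝ × ℝ → ℝ)
    (hF : Continuous F) (hG : Continuous G) (hL : Continuous L) (hLb : Continuous Lb)
    (y y' : ℝ → ℝ)
    (hy : ∀ x ∈ Icc a b, HasDerivWithinAt y (y' x) (Icc a b) x)
    (hy' : ContinuousOn y' (Icc a b))
    (hode : ∀ x ∈ Icc a b, F (x, y x, y' x) = 0)
    (hbnd : ∀ c ∈ ({a, b} : Set ℝ), G (c, y c, y' c) = 0) :
    ∃ μ μb : Measure (ℝ × ℝ × ℝ), FeasiblePair a b F G μ μb ∧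
      (∫ p, L p ∂μ) + (∫ p, Lb p ∂μb)
        = (∫ x in Icc a b, L (x, y x, y' x)) + Lb (a, y a, y' a) + Lb (b, y b, y' b) := by
  set Φ : ℝ → ℝ × ℝ × ℝ := fun x => (x, y x, y' x) with hΦdef
  set A : ℝ × ℝ × ℝ := (a, y a, y' a) with hAdef
  set B : ℝ × ℝ × ℝ := (b, y b, y' b) with hBdef
  set ν : Measure ℝ := volume.restrict (Icc a b) with hνdef
  set μ : Measure (ℝ × ℝ × ℝ) := Measure.map Φ ν with hμdef
  set μb : Measure (ℝ × ℝ × ℝ) := Measure.dirac A + Measure.dirac B with hμbdef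
  have hyc : ContinuousOn y (Icc a b) := fun x hx => (hy x hx).continuousWithinAt
  have hΦc : ContinuousOn Φ (Icc a b) := continuousOn_id.prodMk (hyc.prodMk hy')
  have hΦm : AEMeasurable Φ ν := hΦc.aemeasurable measurableSet_Icc
  -- generic map-integral identity
  have hmap : ∀ f : ℝ × ℝ × ℝ → ℝ, Continuous f →
      ∫ p, f p ∂μ = ∫ x in Icc a b, f (x, y x, y' x) := by
    intro f hf
    rw [hμdef, integral_map hΦm hf.aestronglyMeasurable]
  have hμ_apply : ∀ s : Set (ℝ × ℝ × ℝ), MeasurableSet s → (∀ x ∈ Icc a b, Φ x ∈ s) →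
      μ sᶜ = 0 := by
    intro s hs hsub
    rw [hμdef, Measure.map_apply_of_aemeasurable hΦm hs.compl, hνdef,
      Measure.restrict_apply' measurableSet_Icc]
    convert measure_empty (μ := (volume : Measure ℝ))
    ext x
    simp only [mem_inter_iff, mem_preimage, mem_compl_iff, mem_empty_iff_false, iff_false,
      not_and]
    exact fun h hx => h (hsub x hx)
  have hμb_apply : ∀ s : Set (ℝ × ℝ × ℝ), A ∈ s → B ∈ s → μb sᶜ = 0 := by
    intro s hA hB
    rw [hμbdef]
    simp [Measure.dirac_apply, indicator_apply, hA, hB]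
  refine ⟨μ, μb, ⟨?_, ?_, ?_, ?_, ?_, ?_, ?_, ?_, ?_, ?_⟩, ?_⟩
  · -- μ finite
    constructor
    rw [hμdef, Measure.map_apply_of_aemeasurable hΦm MeasurableSet.univ]
    simp only [preimage_univ, hνdef, Measure.restrict_apply_univ]
    simp [Real.volume_Icc]
  · infer_instance
  · -- compact support of μ
    refine ⟨Φ '' Icc a b, isCompact_Icc.image_of_continuousOn hΦc, ?_⟩
    exact hμ_apply _ (isCompact_Icc.image_of_continuousOn hΦc).isClosed.measurableSet
      (fun x hx => mem_image_of_mem _ hx)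
  · -- compact support of μb
    refine ⟨{A, B}, (Set.toFinite ({A, B} : Set (ℝ × ℝ × ℝ))).isCompact, ?_⟩
    exact hμb_apply _ (by simp) (by simp)
  · exact hμ_apply _ (measurableSet_Icc.prod (MeasurableSet.univ.prod MeasurableSet.univ))
      (fun x hx => by simp [hΦdef, hx])
  · exact hμb_apply _ (by simp [hAdef]) (by simp [hBdef])
  · -- the integration-by-parts / Stokes constraint
    intro φ hφ
    have hfd : Continuous (fun p : ℝ × ℝ => fderiv ℝ φ p) := hφ.continuous_fderiv (by simp)
    have hint_cont : Continuous (fun p : ℝ × ℝ × ℝ =>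
        fderiv ℝ φ (p.1, p.2.1) (1, 0) + fderiv ℝ φ (p.1, p.2.1) (0, 1) * p.2.2) := by
      have h1 : Continuous (fun p : ℝ × ℝ × ℝ => (p.1, p.2.1)) := by fun_prop
      exact ((hfd.comp h1).clm_apply continuous_const).add
        (((hfd.comp h1).clm_apply continuous_const).mul (by fun_prop))
    rw [hmap _ hint_cont]
    -- FTC on the left side
    have hgc : ContinuousOn (fun x => φ (x, y x)) (Icc a b) :=
      hφ.continuous.comp_continuousOn (continuousOn_id.prodMk hyc)
    have hgd : ∀ x ∈ Icc a b, HasDerivWithinAt (fun x => φ (x, y x))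
        (fderiv ℝ φ (x, y x) (1, 0) + fderiv ℝ φ (x, y x) (0, 1) * y' x) (Icc a b) x := by
      intro x hx
      have h1 : HasDerivWithinAt (fun t => (t, y t)) ((1 : ℝ), y' x) (Icc a b) x :=
        (hasDerivWithinAt_id x _).prodMk (hy x hx)
      have h2 : HasFDerivAt φ (fderiv ℝ φ (x, y x)) (x, y x) :=
        (hφ.differentiable (by simp) (x, y x)).hasFDerivAt
      have h3 := h2.comp_hasDerivWithinAt x h1
      convert h3 using 1
      case e'_4 => rfl
      case e'_5 => rfl
      case e'_8 => rfl
      have he : ((1 : ℝ), y' x) = ((1 : ℝ), (0 : ℝ)) + y' x • ((0 : ℝ), (1 : ℝ)) := by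
        simp
      rw [he, map_add, (fderiv ℝ φ (x, y x)).map_smul, smul_eq_mul, mul_comm]
    have hdercont : ContinuousOn (fun x =>
        fderiv ℝ φ (x, y x) (1, 0) + fderiv ℝ φ (x, y x) (0, 1) * y' x) (Icc a b) := by
      have h1 : ContinuousOn (fun x : ℝ => (x, y x)) (Icc a b) := continuousOn_id.prodMk hyc
      exact (((hfd.comp_continuousOn h1).clm_apply continuousOn_const).add
        ((((hfd.comp_continuousOn h1)).clm_apply continuousOn_const).mul hy'))
    have hftc : ∫ x in Icc a b,
        (fderiv ℝ φ (x, y x) (1, 0) + fderiv ℝ φ (x, y x) (0, 1) * y' x)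
        = φ (b, y b) - φ (a, y a) := by
      rw [integral_Icc_eq_integral_Ioc, ← intervalIntegral.integral_of_le hab.le]
      refine intervalIntegral.integral_eq_sub_of_hasDeriv_right_of_le hab.le hgc
        (fun x hx => ?_) ?_
      · exact ((hgd x (Ioo_subset_Icc_self hx)).hasDerivAt
          (Icc_mem_nhds hx.1 hx.2)).hasDerivWithinAt
      · rw [intervalIntegrable_iff_integrableOn_Icc_of_le hab.le]
        exact hdercont.integrableOn_compact isCompact_Icc
    rw [hftc]
    -- right side: dirac integrals
    have hsm : StronglyMeasurable (fun p : ℝ × ℝ × ℝ =>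
        φ (p.1, p.2.1) * (if p.1 = a then (-1 : ℝ) else 1)) := by
      refine Measurable.stronglyMeasurable ?_
      refine ((hφ.continuous.comp (by fun_prop : Continuous
        (fun p : ℝ × ℝ × ℝ => (p.1, p.2.1)))).measurable).mul ?_
      exact Measurable.ite (measurableSet_eq_fun (by fun_prop) measurable_const)
        measurable_const measurable_const
    rw [hμbdef, integral_dirac_add_dirac hsm]
    simp only [hAdef, hBdef]
    rw [if_neg hab.ne']
    norm_num
    ring
  · -- ODE constraint
    intro φ hφ
    have hc : Continuous (fun p : ℝ × ℝ × ℝ => φ (p.1, p.2.1) * F p) :=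
      (hφ.continuous.comp (by fun_prop)).mul hF
    rw [hmap _ hc]
    rw [setIntegral_congr_fun (g := fun _ => (0 : ℝ)) measurableSet_Icc
      (fun x hx => by simp [hode x hx]), integral_zero]
  · -- boundary constraint
    intro φ hφ
    have hsm : StronglyMeasurable (fun p : ℝ × ℝ × ℝ => φ (p.1, p.2.1) * G p) :=
      ((hφ.continuous.comp (by fun_prop : Continuous
        (fun p : ℝ × ℝ × ℝ => (p.1, p.2.1)))).mul hG).stronglyMeasurable
    rw [hμbdef, integral_dirac_add_dirac hsm]
    have h1 := hbnd a (by simp)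
    have h2 := hbnd b (by simp)
    simp [hAdef, hBdef, h1, h2]
  · -- x-marginal of μb
    rw [hμbdef, Measure.map_add _ _ measurable_fst, Measure.map_dirac' measurable_fst,
      Measure.map_dirac' measurable_fst]
  · -- objective value
    rw [hmap _ hL, hμbdef, integral_dirac_add_dirac hLb.stronglyMeasurable]
    simp only [hAdef, hBdef]
    ring

/-- Theorem 2 specialized to `n = n_y = 1`, `Ω = [a,b]`: any bound on the LP objective valid for
all feasible measure pairs is also a bound on the functional `J` evaluated along any solution
`y` of the ODE `F(x, y, y') = 0`, `G = 0` on the boundary. -/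
theorem lp_bounds_functional
    (a b : ℝ) (hab : a < b) (F G L Lb : ℝ × ℝ × ℝ → ℝ)
    (hF : Continuous F) (hG : Continuous G) (hL : Continuous L) (hLb : Continuous Lb)
    (y y' : ℝ → ℝ)
    (hy : ∀ x ∈ Icc a b, HasDerivWithinAt y (y' x) (Icc a b) x)
    (hy' : ContinuousOn y' (Icc a b))
    (hode : ∀ x ∈ Icc a b, F (x, y x, y' x) = 0)
    (hbnd : ∀ c ∈ ({a, b} : Set ℝ), G (c, y c, y' c) = 0)
    (c : ℝ) :
    ((∀ μ μb : Measure (ℝ × ℝ × ℝ), FeasiblePair a b F G μ μb →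
        c ≤ (∫ p, L p ∂μ) + ∫ p, Lb p ∂μb) →
      c ≤ (∫ x in Icc a b, L (x, y x, y' x)) + Lb (a, y a, y' a) + Lb (b, y b, y' b)) ∧
    ((∀ μ μb : Measure (ℝ × ℝ × ℝ), FeasiblePair a b F G μ μb →
        (∫ p, L p ∂μ) + (∫ p, Lb p ∂μb) ≤ c) →
      (∫ x in Icc a b, L (x, y x, y' x)) + Lb (a, y a, y' a) + Lb (b, y b, y' b) ≤ c) := by
  obtain ⟨μ, μb, hfeas, heq⟩ :=
    occupation_feasible a b hab F G L Lb hF hG hL hLb y y' hy hy' hode hbnd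
  constructor
  · intro h
    have := h μ μb hfeas
    linarith
  · intro h
    have := h μ μb hfeas
    linarith
end

section
/- Let n, d be natural numbers with d ≥ 1, let N > 0 be a real number, and let L be a real linear functional on the space of real polynomials in n variables. Suppose that L(p²) ≥ 0 for every polynomial p of total degree at most d, and L((N² − Σ_{j=1}^n xⱼ²)·p²) ≥ 0 for every polynomial p of total degree at most d − 1. Then for every i ∈ {1,…,n} and every natural number k ≤ d: 0 ≤ L(x_i^{2k}) ≤ N^{2k} · L(1). (This is the boundedness-of-moment-sequences step in the proof of Theorem 3: feasibility of the moment and localizing matrix constraints with the Archimedean ball constraint N² − xᵀx ≥ 0 forces all even pseudo-moments to be bounded in terms of the mass L(1).) -/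
open MvPolynomial

/-- Boundedness of pseudo-moment sequences (the key step in the proof of Theorem 3): if a
linear functional `L` on real polynomials in `n` variables is nonnegative on squares of
polynomials of degree at most `d` and on `(N² − Σ xⱼ²)` times squares of polynomials of degree
at most `d − 1`, then all even pseudo-moments `L(xᵢ^(2k))`, `k ≤ d`, satisfy
`0 ≤ L(xᵢ^(2k)) ≤ N^(2k) L(1)`. -/
theorem pseudo_moments_bounded
    (n d : ℕ) (hd : 1 ≤ d) (N : ℝ) (hN : 0 < N)
    (L : MvPolynomial (Fin n) ℝ →ₗ[ℝ] ℝ)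
    (hpsd : ∀ p : MvPolynomial (Fin n) ℝ, p.totalDegree ≤ d → 0 ≤ L (p ^ 2))
    (hloc : ∀ p : MvPolynomial (Fin n) ℝ, p.totalDegree ≤ d - 1 →
      0 ≤ L ((C (N ^ 2) - ∑ j : Fin n, X j ^ 2) * p ^ 2)) :
    ∀ i : Fin n, ∀ k : ℕ, k ≤ d →
      0 ≤ L (X i ^ (2 * k)) ∧ L (X i ^ (2 * k)) ≤ N ^ (2 * k) * L 1 := by
  intro i k hk
  have hX2 : ∀ m : ℕ, (X i : MvPolynomial (Fin n) ℝ) ^ (2 * m) = (X i ^ m) ^ 2 := by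
    intro m; rw [← pow_mul, mul_comm]
  constructor
  · rw [hX2]
    exact hpsd _ (by simp [totalDegree_X_pow]; omega)
  · induction k with
    | zero => simp
    | succ k ih =>
      have hk' : k ≤ d := Nat.le_of_succ_le hk
      have ihb := ih hk'
      have hdeg : (X i ^ k : MvPolynomial (Fin n) ℝ).totalDegree ≤ d - 1 := by
        simp [totalDegree_X_pow]; omega
      have h1 := hloc (X i ^ k) hdeg
      have key : (C (N ^ 2) - ∑ j : Fin n, X j ^ 2) * (X i ^ k : MvPolynomial (Fin n) ℝ) ^ 2
          = (N ^ 2) • (X i ^ k) ^ 2 - ∑ j : Fin n, (X j * X i ^ k) ^ 2 := by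
        rw [smul_eq_C_mul, sub_mul, Finset.sum_mul]
        refine congrArg₂ (· - ·) rfl ?_
        exact Finset.sum_congr rfl (fun j _ => by ring)
      rw [key, map_sub, map_smul, map_sum] at h1
      have hterm : ∀ j : Fin n, 0 ≤ L ((X j * X i ^ k) ^ 2) := by
        intro j
        refine hpsd _ (le_trans (totalDegree_mul _ _) ?_)
        simp [totalDegree_X, totalDegree_X_pow]; omega
      have hsingle : L ((X i * X i ^ k) ^ 2) ≤ ∑ j : Fin n, L ((X j * X i ^ k) ^ 2) :=
        Finset.single_le_sum (fun j _ => hterm j) (Finset.mem_univ i)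
      have hii : (X i * X i ^ k : MvPolynomial (Fin n) ℝ) ^ 2 = X i ^ (2 * (k + 1)) := by
        rw [← pow_succ']
        rw [hX2]
      have hmain : L (X i ^ (2 * (k + 1))) ≤ N ^ 2 * L ((X i ^ k) ^ 2) := by
        rw [← hii]
        have := sub_nonneg.mp h1
        calc L ((X i * X i ^ k) ^ 2) ≤ ∑ j : Fin n, L ((X j * X i ^ k) ^ 2) := hsingle
          _ ≤ N ^ 2 • L ((X i ^ k) ^ 2) := this
          _ = N ^ 2 * L ((X i ^ k) ^ 2) := by rw [smul_eq_mul]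
      calc L (X i ^ (2 * (k + 1))) ≤ N ^ 2 * L ((X i ^ k) ^ 2) := hmain
        _ = N ^ 2 * L (X i ^ (2 * k)) := by rw [← hX2]
        _ ≤ N ^ 2 * (N ^ (2 * k) * L 1) := by
            exact mul_le_mul_of_nonneg_left ihb (by positivity)
        _ = N ^ (2 * (k + 1)) * L 1 := by ring
end
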